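/- Assume λ_k < α ≤ β. Then the functional J̃_{α,β} : V₂ → ℝ is continuously Fréchet differentiable, and for all v, w ∈ V₂ its derivative satisfies ⟨J̃_{α,β}'(v), w⟩ = ⟨J_{α,β}'(M_{α,β}(v)+v), w⟩ = B(M_{α,β}(v)+v, w) − α∫_Ω (M_{α,β}(v)+v)⁺ w + β∫_Ω (M_{α,β}(v)+v)⁻ w. -/

import Mathlib

open MeasureTheory RealInnerProductSpace Filter Topology

/-- The functional `J_{α,β}(u) = ½(B(u,u) - α∫_Ω (u⁺)² - β∫_Ω (u⁻)²)`, where the Hilbert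
space `X₀` carries the Gagliardo-type inner product `B = ⟪·,·⟫` and `T : X₀ → L²(Ω)` is the
embedding into `L²(Ω)`; note `∫_Ω (u⁺)² = ‖(Tu)⁺‖²_{L²}`. -/
noncomputable def Jfun {Ω : Type*} [MeasurableSpace Ω] {μ : Measure Ω}
    {X₀ : Type*} [NormedAddCommGroup X₀] [InnerProductSpace ℝ X₀]
    (T : X₀ →ₗ[ℝ] Lp ℝ 2 μ) (α β : ℝ) (u : X₀) : ℝ :=
  (⟪u, u⟫ - α * ‖Lp.posPart (T u)‖ ^ 2 - β * ‖Lp.negPart (T u)‖ ^ 2) / 2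

/-- The pairing `⟨J'_{α,β}(u), v⟩ = B(u,v) - α∫_Ω u⁺v + β∫_Ω u⁻v` of the Fréchet
derivative of `J_{α,β}`. -/
noncomputable def DJfun {Ω : Type*} [MeasurableSpace Ω] {μ : Measure Ω}
    {X₀ : Type*} [NormedAddCommGroup X₀] [InnerProductSpace ℝ X₀]
    (T : X₀ →ₗ[ℝ] Lp ℝ 2 μ) (α β : ℝ) (u v : X₀) : ℝ :=
  ⟪u, v⟫ - α * ⟪Lp.posPart (T u), T v⟫ + β * ⟪Lp.negPart (T u), T v⟫


section Aux1
open MeasureTheory RealInnerProductSpace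
namespace Stmt7Aux
variable {A : Type*} [MeasurableSpace A] {μ : Measure A}

lemma innerL2 (f g : Lp ℝ 2 μ) : ⟪f, g⟫ = ∫ a, f a * g a ∂μ := by
  rw [L2.inner_def]; simp [RCLike.inner_apply]
  congr 1; funext a; ring

lemma intMul (f g : Lp ℝ 2 μ) : Integrable (fun a => f a * g a) μ := by
  have := L2.integrable_inner (𝕜 := ℝ) f g
  simpa [RCLike.inner_apply, mul_comm] using this

lemma pw_aux (x : ℝ) : max x 0 * (max x 0 - x) = 0 := by
  rcases le_total x 0 with h|h
  · simp [max_eq_right h]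
  · simp [max_eq_left h]

lemma pw_low (x y : ℝ) :
    0 ≤ max (x+y) 0 * max (x+y) 0 - max x 0 * max x 0 - 2*(max x 0 * y) := by
  have h1 := pw_aux x; have h2 := pw_aux (x+y)
  have h3 : (0:ℝ) ≤ max x 0 := le_max_right _ _
  have h6 : x+y ≤ max (x+y) 0 := le_max_left _ _
  nlinarith [sq_nonneg (max (x+y) 0 - max x 0), mul_nonneg h3 (sub_nonneg.2 h6)]

lemma pw_up (x y : ℝ) :
    max (x+y) 0 * max (x+y) 0 - max x 0 * max x 0 - 2*(max x 0 * y) ≤ y^2 := by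
  have h2 := pw_aux (x+y)
  have h4 : (0:ℝ) ≤ max (x+y) 0 := le_max_right _ _
  have h5 : x ≤ max x 0 := le_max_left _ _
  nlinarith [sq_nonneg (max (x+y) 0 - (max x 0 + y)),
    mul_le_mul_of_nonneg_left (by linarith : x + y ≤ max x 0 + y) h4]

lemma posPart_lip (f g : Lp ℝ 2 μ) : ‖Lp.posPart f - Lp.posPart g‖ ≤ ‖f - g‖ := by
  exact (LipschitzWith.norm_compLp_sub_le Lp.lipschitzWith_pos_part (max_eq_right le_rfl) f g).trans (by simp)

lemma negPart_lip (f g : Lp ℝ 2 μ) : ‖Lp.negPart f - Lp.negPart g‖ ≤ ‖f - g‖ := by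
  have h := posPart_lip (-f) (-g)
  have e : -f - -g = -(f - g) := by abel
  rw [e, norm_neg] at h
  exact h

lemma posPart_zero : Lp.posPart (0 : Lp ℝ 2 μ) = 0 :=
  LipschitzWith.compLp_zero Lp.lipschitzWith_pos_part (max_eq_right le_rfl)

lemma negPart_zero : Lp.negPart (0 : Lp ℝ 2 μ) = 0 := by
  show Lp.posPart (-(0 : Lp ℝ 2 μ)) = 0
  rw [neg_zero]; exact posPart_zero

lemma posPart_sub_negPart (f : Lp ℝ 2 μ) : Lp.posPart f - Lp.negPart f = f := by
  ext1
  filter_upwards [Lp.coeFn_posPart f, Lp.coeFn_negPart f,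
    Lp.coeFn_sub (Lp.posPart f) (Lp.negPart f)] with a h1 h2 h3
  rw [h3, Pi.sub_apply, h1, h2]
  rcases le_total (f a) 0 with h|h
  · rw [max_eq_right h, min_eq_left h]; ring
  · rw [max_eq_left h, min_eq_right h]; ring

lemma posPart_expand (f h : Lp ℝ 2 μ) :
    0 ≤ ‖Lp.posPart (f + h)‖ ^ 2 - ‖Lp.posPart f‖ ^ 2 - 2 * ⟪Lp.posPart f, h⟫ ∧
      ‖Lp.posPart (f + h)‖ ^ 2 - ‖Lp.posPart f‖ ^ 2 - 2 * ⟪Lp.posPart f, h⟫ ≤ ‖h‖ ^ 2 := by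
  set F := Lp.posPart f with hFdef
  set G := Lp.posPart (f + h) with hGdef
  have hG : ‖G‖^2 = ∫ a, G a * G a ∂μ := by rw [← real_inner_self_eq_norm_sq, innerL2]
  have hF : ‖F‖^2 = ∫ a, F a * F a ∂μ := by rw [← real_inner_self_eq_norm_sq, innerL2]
  have hFh : ⟪F, h⟫ = ∫ a, F a * h a ∂μ := innerL2 _ _
  have hh : ‖h‖^2 = ∫ a, h a * h a ∂μ := by rw [← real_inner_self_eq_norm_sq, innerL2]
  have hint : Integrable (fun a => G a * G a - F a * F a - 2 * (F a * h a)) μ :=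
    ((intMul G G).sub (intMul F F)).sub ((intMul F h).const_mul 2)
  have key : ‖G‖^2 - ‖F‖^2 - 2*⟪F,h⟫
      = ∫ a, (G a * G a - F a * F a - 2 * (F a * h a)) ∂μ := by
    rw [hG, hF, hFh,
      integral_sub (show Integrable (fun a => (G a * G a - F a * F a)) μ from
        (intMul G G).sub (intMul F F))
        (show Integrable (fun a => (2:ℝ) * (F a * h a)) μ from (intMul F h).const_mul 2),
      integral_sub (intMul G G) (intMul F F), integral_const_mul]
  have hae : ∀ᵐ a ∂μ, G a = max (f a + h a) 0 ∧ F a = max (f a) 0 := by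
    filter_upwards [Lp.coeFn_posPart (f+h), Lp.coeFn_posPart f, Lp.coeFn_add f h]
      with a h1 h2 h3
    exact ⟨by rw [hGdef, h1, h3, Pi.add_apply], by rw [hFdef, h2]⟩
  constructor
  · rw [key]
    apply integral_nonneg_of_ae
    filter_upwards [hae] with a ha
    rw [ha.1, ha.2]
    exact pw_low (f a) (h a)
  · rw [key, hh]
    apply integral_mono_ae hint (intMul h h)
    filter_upwards [hae] with a ha
    rw [ha.1, ha.2]
    have := pw_up (f a) (h a)
    nlinarith [this]

lemma negPart_expand (f h : Lp ℝ 2 μ) :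
    0 ≤ ‖Lp.negPart (f + h)‖ ^ 2 - ‖Lp.negPart f‖ ^ 2 + 2 * ⟪Lp.negPart f, h⟫ ∧
      ‖Lp.negPart (f + h)‖ ^ 2 - ‖Lp.negPart f‖ ^ 2 + 2 * ⟪Lp.negPart f, h⟫ ≤ ‖h‖ ^ 2 := by
  have h0 := posPart_expand (-f) (-h)
  have e : (-f) + (-h) = -(f+h) := (neg_add f h).symm
  rw [e] at h0
  rw [show Lp.posPart (-(f+h)) = Lp.negPart (f+h) from rfl,
    show Lp.posPart (-f) = Lp.negPart f from rfl, inner_neg_right, norm_neg] at h0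
  exact ⟨by linarith [h0.1], by linarith [h0.2]⟩

end Stmt7Aux

end Aux1

section Aux2
open MeasureTheory RealInnerProductSpace
namespace Stmt7Aux

variable {A : Type*} [MeasurableSpace A] {μ : Measure A}
  {X₀ : Type*} [NormedAddCommGroup X₀] [InnerProductSpace ℝ X₀]
  (T : X₀ →ₗ[ℝ] Lp ℝ 2 μ) (α β lam1 : ℝ)

lemma aux_T2 (hlam1 : 0 < lam1) (hPoin : ∀ u : X₀, lam1 * ‖T u‖ ^ 2 ≤ ⟪u, u⟫) (u : X₀) :
    ‖T u‖ ^ 2 ≤ lam1⁻¹ * ‖u‖ ^ 2 := by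
  have h1 : lam1 * ‖T u‖^2 ≤ ‖u‖^2 :=
    (hPoin u).trans (real_inner_self_eq_norm_sq u).le
  rw [inv_mul_eq_div, le_div_iff₀ hlam1]
  nlinarith [h1]

lemma aux_TT (hlam1 : 0 < lam1) (hPoin : ∀ u : X₀, lam1 * ‖T u‖ ^ 2 ≤ ⟪u, u⟫) (u : X₀) :
    ‖T u‖ ≤ Real.sqrt lam1⁻¹ * ‖u‖ := by
  calc ‖T u‖ = Real.sqrt (‖T u‖^2) := (Real.sqrt_sq (norm_nonneg _)).symm
    _ ≤ Real.sqrt (lam1⁻¹ * ‖u‖^2) := Real.sqrt_le_sqrt (aux_T2 T lam1 hlam1 hPoin u)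
    _ = Real.sqrt lam1⁻¹ * ‖u‖ := by
        rw [Real.sqrt_mul (by positivity), Real.sqrt_sq (norm_nonneg _)]

lemma aux_ip' (hlam1 : 0 < lam1) (hPoin : ∀ u : X₀, lam1 * ‖T u‖ ^ 2 ≤ ⟪u, u⟫)
    (p₁ p₂ : Lp ℝ 2 μ) (x y w : X₀) (hplip : ‖p₁ - p₂‖ ≤ ‖T x - T y‖) :
    |⟪p₁ - p₂, T w⟫| ≤ lam1⁻¹ * (‖x - y‖ * ‖w‖) := by
  set c := Real.sqrt lam1⁻¹ with hc
  have hc2 : c^2 = lam1⁻¹ := Real.sq_sqrt (by positivity)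
  have h1 : |⟪p₁ - p₂, T w⟫| ≤ ‖p₁ - p₂‖ * ‖T w‖ := abs_real_inner_le_norm _ _
  have h2 : ‖p₁ - p₂‖ ≤ c * ‖x - y‖ := by
    refine hplip.trans ?_
    rw [← map_sub]
    exact aux_TT T lam1 hlam1 hPoin _
  have h3 : ‖T w‖ ≤ c * ‖w‖ := aux_TT T lam1 hlam1 hPoin w
  calc |⟪p₁ - p₂, T w⟫| ≤ ‖p₁ - p₂‖ * ‖T w‖ := h1
    _ ≤ (c * ‖x - y‖) * (c * ‖w‖) :=
        mul_le_mul h2 h3 (norm_nonneg _) (by positivity)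
    _ = lam1⁻¹ * (‖x - y‖ * ‖w‖) := by rw [← hc2]; ring

lemma aux_DJ_lip (hα : 0 ≤ α) (hβ : 0 ≤ β) (hlam1 : 0 < lam1)
    (hPoin : ∀ u : X₀, lam1 * ‖T u‖ ^ 2 ≤ ⟪u, u⟫) (u₁ u₂ w : X₀) :
    |DJfun T α β u₁ w - DJfun T α β u₂ w| ≤ (1 + (α + β) * lam1⁻¹) * (‖u₁ - u₂‖ * ‖w‖) := by
  have e : DJfun T α β u₁ w - DJfun T α β u₂ w
      = ⟪u₁ - u₂, w⟫ - α * ⟪Lp.posPart (T u₁) - Lp.posPart (T u₂), T w⟫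
        + β * ⟪Lp.negPart (T u₁) - Lp.negPart (T u₂), T w⟫ := by
    simp only [DJfun, inner_sub_left]; ring
  rw [e]
  set A1 := ⟪u₁ - u₂, w⟫
  set B1 := ⟪Lp.posPart (T u₁) - Lp.posPart (T u₂), T w⟫
  set C1 := ⟪Lp.negPart (T u₁) - Lp.negPart (T u₂), T w⟫
  have b1 : |A1| ≤ ‖u₁ - u₂‖ * ‖w‖ := abs_real_inner_le_norm _ _
  have b2 : |B1| ≤ lam1⁻¹ * (‖u₁ - u₂‖ * ‖w‖) :=
    aux_ip' T lam1 hlam1 hPoin _ _ u₁ u₂ w (posPart_lip _ _)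
  have b3 : |C1| ≤ lam1⁻¹ * (‖u₁ - u₂‖ * ‖w‖) :=
    aux_ip' T lam1 hlam1 hPoin _ _ u₁ u₂ w (negPart_lip _ _)
  have tri : |A1 - α * B1 + β * C1| ≤ |A1| + |α * B1| + |β * C1| := by
    calc |A1 - α * B1 + β * C1| ≤ |A1 - α * B1| + |β * C1| := abs_add_le _ _
      _ ≤ |A1| + |α * B1| + |β * C1| := by
          have := abs_sub A1 (α * B1)
          linarith [abs_sub_abs_le_abs_sub A1 (α*B1)]
  have hb2 : |α * B1| ≤ α * (lam1⁻¹ * (‖u₁ - u₂‖ * ‖w‖)) := by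
    rw [abs_mul, abs_of_nonneg hα]
    exact mul_le_mul_of_nonneg_left b2 hα
  have hb3 : |β * C1| ≤ β * (lam1⁻¹ * (‖u₁ - u₂‖ * ‖w‖)) := by
    rw [abs_mul, abs_of_nonneg hβ]
    exact mul_le_mul_of_nonneg_left b3 hβ
  have idr : (1 + (α + β) * lam1⁻¹) * (‖u₁ - u₂‖ * ‖w‖)
      = ‖u₁ - u₂‖ * ‖w‖ + α * (lam1⁻¹ * (‖u₁ - u₂‖ * ‖w‖))
        + β * (lam1⁻¹ * (‖u₁ - u₂‖ * ‖w‖)) := by ring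
  linarith [tri, b1, hb2, hb3]

lemma aux_DJ_zero (w : X₀) : DJfun T α β 0 w = 0 := by
  simp [DJfun, map_zero, posPart_zero, negPart_zero]

lemma aux_DJ_bound (hα : 0 ≤ α) (hβ : 0 ≤ β) (hlam1 : 0 < lam1)
    (hPoin : ∀ u : X₀, lam1 * ‖T u‖ ^ 2 ≤ ⟪u, u⟫) (u w : X₀) :
    |DJfun T α β u w| ≤ (1 + (α + β) * lam1⁻¹) * (‖u‖ * ‖w‖) := by
  have := aux_DJ_lip T α β lam1 hα hβ hlam1 hPoin u 0 w
  rwa [aux_DJ_zero, sub_zero, sub_zero] at this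

end Stmt7Aux
end Aux2

section Aux3
open MeasureTheory RealInnerProductSpace
namespace Stmt7Aux

variable {A : Type*} [MeasurableSpace A] {μ : Measure A}
  {X₀ : Type*} [NormedAddCommGroup X₀] [InnerProductSpace ℝ X₀]
  (T : X₀ →ₗ[ℝ] Lp ℝ 2 μ) (α β lam1 : ℝ)

lemma aux_J_expand (hα : 0 ≤ α) (hβ : 0 ≤ β) (hlam1 : 0 < lam1)
    (hPoin : ∀ u : X₀, lam1 * ‖T u‖ ^ 2 ≤ ⟪u, u⟫) (u h : X₀) :
    |Jfun T α β (u + h) - Jfun T α β u - DJfun T α β u h|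
      ≤ ((1 + (α + β) * lam1⁻¹) / 2) * ‖h‖ ^ 2 := by
  obtain ⟨EP, hEPdef⟩ : ∃ x : ℝ, x = ‖Lp.posPart (T u + T h)‖ ^ 2 - ‖Lp.posPart (T u)‖ ^ 2
      - 2 * ⟪Lp.posPart (T u), T h⟫ := ⟨_, rfl⟩
  obtain ⟨EN, hENdef⟩ : ∃ x : ℝ, x = ‖Lp.negPart (T u + T h)‖ ^ 2 - ‖Lp.negPart (T u)‖ ^ 2
      + 2 * ⟪Lp.negPart (T u), T h⟫ := ⟨_, rfl⟩
  have hEP1 : 0 ≤ EP := hEPdef ▸ (posPart_expand (T u) (T h)).1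
  have hEP2 : EP ≤ ‖T h‖ ^ 2 := hEPdef ▸ (posPart_expand (T u) (T h)).2
  have hEN1 : 0 ≤ EN := hENdef ▸ (negPart_expand (T u) (T h)).1
  have hEN2 : EN ≤ ‖T h‖ ^ 2 := hENdef ▸ (negPart_expand (T u) (T h)).2
  have hTh : ‖T h‖ ^ 2 ≤ lam1⁻¹ * ‖h‖ ^ 2 := aux_T2 T lam1 hlam1 hPoin h
  have e : Jfun T α β (u + h) - Jfun T α β u - DJfun T α β u h
      = (‖h‖ ^ 2 - α * EP - β * EN) / 2 := by
    simp only [Jfun, DJfun, map_add]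
    rw [real_inner_add_add_self, real_inner_self_eq_norm_sq h, hEPdef, hENdef]
    ring
  rw [e]
  have r1 : α * EP ≤ α * (lam1⁻¹ * ‖h‖ ^ 2) :=
    mul_le_mul_of_nonneg_left (hEP2.trans hTh) hα
  have r2 : β * EN ≤ β * (lam1⁻¹ * ‖h‖ ^ 2) :=
    mul_le_mul_of_nonneg_left (hEN2.trans hTh) hβ
  have r3 : 0 ≤ α * EP := mul_nonneg hα hEP1
  have r4 : 0 ≤ β * EN := mul_nonneg hβ hEN1
  have r5 : 0 ≤ ‖h‖ ^ 2 := sq_nonneg _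
  have r6 : 0 ≤ α * (lam1⁻¹ * ‖h‖ ^ 2) := by positivity
  have r7 : 0 ≤ β * (lam1⁻¹ * ‖h‖ ^ 2) := by positivity
  have idr : ((1 + (α + β) * lam1⁻¹) / 2) * ‖h‖ ^ 2 * 2
      = ‖h‖ ^ 2 + α * (lam1⁻¹ * ‖h‖ ^ 2) + β * (lam1⁻¹ * ‖h‖ ^ 2) := by ring
  rw [abs_le]
  exact ⟨by linarith, by linarith⟩

lemma aux_conc (hα : 0 < α) (hαβ : α ≤ β) {lk : ℝ} (hlk : 0 < lk) (u₁ u₂ x : X₀)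
    (hh : ‖u₁ - u₂‖ ^ 2 ≤ lk * ‖T (u₁ - u₂)‖ ^ 2) :
    DJfun T α β (u₁ + x) (u₁ - u₂) - DJfun T α β (u₂ + x) (u₁ - u₂)
      ≤ (1 - α / lk) * ‖u₁ - u₂‖ ^ 2 := by
  have hba : T (u₁ + x) - T (u₂ + x) = T (u₁ - u₂) := by
    rw [← map_sub]; congr 1; abel
  have e2 : ⟪u₁ + x, u₁ - u₂⟫ - ⟪u₂ + x, u₁ - u₂⟫ = ‖u₁ - u₂‖ ^ 2 := by
    rw [← inner_sub_left, show u₁ + x - (u₂ + x) = u₁ - u₂ by abel,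
      real_inner_self_eq_norm_sq]
  obtain ⟨b, hbdef⟩ : ∃ y, y = T (u₁ + x) := ⟨_, rfl⟩
  obtain ⟨a, hadef⟩ : ∃ y, y = T (u₂ + x) := ⟨_, rfl⟩
  rw [← hbdef, ← hadef] at hba
  have e : DJfun T α β (u₁ + x) (u₁ - u₂) - DJfun T α β (u₂ + x) (u₁ - u₂)
      = ‖u₁ - u₂‖ ^ 2 - α * ⟪Lp.posPart b - Lp.posPart a, b - a⟫
        + β * ⟪Lp.negPart b - Lp.negPart a, b - a⟫ := by
    simp only [DJfun, inner_sub_left, ← hba, ← hbdef, ← hadef]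
    rw [← e2]; ring
  have hS : ⟪Lp.posPart b - Lp.posPart a, b - a⟫ ≤ ‖b - a‖ ^ 2 := by
    calc ⟪Lp.posPart b - Lp.posPart a, b - a⟫ ≤ ‖Lp.posPart b - Lp.posPart a‖ * ‖b - a‖ :=
          real_inner_le_norm _ _
      _ ≤ ‖b - a‖ * ‖b - a‖ := mul_le_mul_of_nonneg_right (posPart_lip _ _) (norm_nonneg _)
      _ = ‖b - a‖ ^ 2 := (sq (‖b - a‖)).symm
  have hb' : Lp.posPart b = b + Lp.negPart b := sub_eq_iff_eq_add.mp (posPart_sub_negPart b)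
  have ha' : Lp.posPart a = a + Lp.negPart a := sub_eq_iff_eq_add.mp (posPart_sub_negPart a)
  have hN : ⟪Lp.posPart b - Lp.posPart a, b - a⟫
      = ‖b - a‖ ^ 2 + ⟪Lp.negPart b - Lp.negPart a, b - a⟫ := by
    rw [hb', ha', show b + Lp.negPart b - (a + Lp.negPart a)
        = (b - a) + (Lp.negPart b - Lp.negPart a) from by abel, inner_add_left,
      real_inner_self_eq_norm_sq]
  have hTh2 : ‖u₁ - u₂‖ ^ 2 ≤ lk * ‖b - a‖ ^ 2 := by rw [hba]; exact hh
  obtain ⟨S, hSdef⟩ : ∃ y : ℝ, y = ⟪Lp.posPart b - Lp.posPart a, b - a⟫ := ⟨_, rfl⟩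
  have hNS : ⟪Lp.negPart b - Lp.negPart a, b - a⟫ = S - ‖b - a‖ ^ 2 := by
    rw [hSdef, hN]; ring
  rw [e, hNS, ← hSdef]
  rw [← hSdef] at hS
  have key : (α / lk) * ‖u₁ - u₂‖ ^ 2 ≤ α * ‖b - a‖ ^ 2 := by
    rw [div_mul_eq_mul_div, div_le_iff₀ hlk]
    nlinarith [mul_le_mul_of_nonneg_left hTh2 hα.le]
  have k2 : (β - α) * S ≤ (β - α) * ‖b - a‖ ^ 2 :=
    mul_le_mul_of_nonneg_left hS (sub_nonneg.2 hαβ)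
  have id1 : ‖u₁ - u₂‖ ^ 2 - α * S + β * (S - ‖b - a‖ ^ 2)
      = ‖u₁ - u₂‖ ^ 2 + ((β - α) * S - β * ‖b - a‖ ^ 2) := by ring
  have id2 : (β - α) * ‖b - a‖ ^ 2 - β * ‖b - a‖ ^ 2 = -(α * ‖b - a‖ ^ 2) := by ring
  have id3 : (1 - α / lk) * ‖u₁ - u₂‖ ^ 2 = ‖u₁ - u₂‖ ^ 2 - (α / lk) * ‖u₁ - u₂‖ ^ 2 := by
    ring
  linarith

end Stmt7Aux
end Aux3

set_option maxHeartbeats 1600000 in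
theorem stmt_7
    {n : ℕ} {s : ℝ} (hs0 : 0 < s) (hs1 : s < 1) (hns : 2 * s < (n : ℝ))
    {Ωs : Set (EuclideanSpace ℝ (Fin n))} (hΩb : Bornology.IsBounded Ωs)
    (hΩm : MeasurableSet Ωs)
    {K : EuclideanSpace ℝ (Fin n) → ℝ} (hKpos : ∀ x, x ≠ 0 → 0 < K x)
    (hK1 : Integrable (fun x => min (‖x‖ ^ 2) 1 * K x))
    (hK2 : ∃ lam > 0, ∀ x, x ≠ 0 → lam * ‖x‖ ^ (-((n : ℝ) + 2 * s)) ≤ K x)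
    (hK3 : ∀ x, K (-x) = K x)
    {X₀ : Type*} [NormedAddCommGroup X₀] [InnerProductSpace ℝ X₀] [CompleteSpace X₀]
    (T : X₀ →ₗ[ℝ] Lp ℝ 2 (volume.restrict Ωs)) (hT : Function.Injective T)
    {lk lk1 : ℝ} (hlk0 : 0 < lk) (hlk : lk < lk1)
    (V₁ V₂ : Submodule ℝ X₀) [FiniteDimensional ℝ V₁]
    (hV₂ : ∀ v : X₀, v ∈ V₂ ↔ ∀ u ∈ V₁, ⟪u, v⟫ = 0 ∧ ⟪T u, T v⟫ = 0)
    (hcompl : IsCompl V₁ V₂)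
    (hV₁b : ∀ u ∈ V₁, ⟪u, u⟫ ≤ lk * ‖T u‖ ^ 2)
    (hV₂b : ∀ v ∈ V₂, lk1 * ‖T v‖ ^ 2 ≤ ⟪v, v⟫)
    (lam1 : ℝ) (hlam1 : 0 < lam1)
    (hPoin : ∀ u : X₀, lam1 * ‖T u‖ ^ 2 ≤ ⟪u, u⟫)
    {α β : ℝ} (hA : lk < α) (hAB : α ≤ β)
    (M : V₂ → V₁)
    (hM : ∀ (v : V₂) (u : V₁),
      Jfun T α β ((u : X₀) + (v : X₀)) ≤ Jfun T α β ((M v : X₀) + (v : X₀)))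
    :
    ∃ D : V₂ → (V₂ →L[ℝ] ℝ), Continuous D ∧ ∀ v : V₂,
      HasFDerivAt (fun v : V₂ => Jfun T α β ((M v : X₀) + (v : X₀))) (D v) v ∧
      ∀ w : V₂, D v w = DJfun T α β ((M v : X₀) + (v : X₀)) (w : X₀) := by
  classical
  have hα : 0 < α := hlk0.trans hA
  have hβ : 0 < β := hα.trans_le hAB
  obtain ⟨Cd, hCddef⟩ : ∃ x : ℝ, x = 1 + (α + β) * lam1⁻¹ := ⟨_, rfl⟩
  have hCd : 0 < Cd := by rw [hCddef]; positivity
  obtain ⟨δ₀, hδdef⟩ : ∃ x : ℝ, x = α / lk - 1 := ⟨_, rfl⟩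
  have hδ : 0 < δ₀ := by
    have := (one_lt_div hlk0).mpr hA
    rw [hδdef]; linarith
  obtain ⟨L, hLdef⟩ : ∃ x : ℝ, x = Cd / δ₀ := ⟨_, rfl⟩
  have hL : 0 ≤ L := by rw [hLdef]; positivity
  have hwnorm : ∀ w : V₂, ‖(w : X₀)‖ = ‖w‖ := fun w => rfl
  have hDJlip := Stmt7Aux.aux_DJ_lip T α β lam1 hα.le hβ.le hlam1 hPoin
  have hDJbound := Stmt7Aux.aux_DJ_bound T α β lam1 hα.le hβ.le hlam1 hPoin
  have hJexp' := Stmt7Aux.aux_J_expand T α β lam1 hα.le hβ.le hlam1 hPoin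
  rw [← hCddef] at hDJlip hDJbound
  have hJexp : ∀ u h : X₀,
      |Jfun T α β (u + h) - Jfun T α β u - DJfun T α β u h| ≤ (Cd / 2) * ‖h‖ ^ 2 := by
    intro u h; rw [hCddef]; exact hJexp' u h
  have hDJsmul : ∀ (x : X₀) (t : ℝ) (w : X₀),
      DJfun T α β x (t • w) = t * DJfun T α β x w := by
    intro x t w
    simp only [DJfun, LinearMap.map_smul, real_inner_smul_right, inner_smul_right]
    ring
  have hDJadd : ∀ x w₁ w₂ : X₀,
      DJfun T α β x (w₁ + w₂) = DJfun T α β x w₁ + DJfun T α β x w₂ := by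
    intro x w₁ w₂
    simp only [DJfun, map_add, inner_add_right]
    ring
  -- first-order criticality of M v
  have hcrit : ∀ (v : V₂) (u : V₁), DJfun T α β ((M v : X₀) + (v : X₀)) (u : X₀) = 0 := by
    intro v u
    obtain ⟨d, hd⟩ : ∃ x : ℝ, x = DJfun T α β ((M v : X₀) + (v : X₀)) (u : X₀) := ⟨_, rfl⟩
    have key : ∀ t : ℝ, t * d ≤ (Cd / 2) * (t ^ 2 * ‖(u : X₀)‖ ^ 2) := by
      intro t
      have h1 := hM v (M v + t • u)
      have hco : ((M v + t • u : V₁) : X₀) = (M v : X₀) + t • (u : X₀) := by push_cast; ring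
      rw [hco] at h1
      have h1' : Jfun T α β (((M v : X₀) + (v : X₀)) + t • (u : X₀))
          ≤ Jfun T α β ((M v : X₀) + (v : X₀)) := by
        rw [show ((M v : X₀) + (v : X₀)) + t • (u : X₀)
            = ((M v : X₀) + t • (u : X₀)) + (v : X₀) from by abel]
        exact h1
      have h2 := hJexp ((M v : X₀) + (v : X₀)) (t • (u : X₀))
      rw [hDJsmul, ← hd] at h2
      have h3 : ‖t • (u : X₀)‖ ^ 2 = t ^ 2 * ‖(u : X₀)‖ ^ 2 := by
        rw [norm_smul, mul_pow, Real.norm_eq_abs, sq_abs]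
      rw [h3] at h2
      have h4 := (abs_le.mp h2).1
      linarith
    have habs : ∀ t : ℝ, 0 < t → |d| ≤ (Cd / 2) * t * ‖(u : X₀)‖ ^ 2 := by
      intro t ht
      have k1 := key t
      have k2 := key (-t)
      rw [neg_sq] at k2
      rw [abs_le]
      constructor <;> nlinarith [k1, k2]
    have hz : d = 0 := by
      by_contra hne
      have habspos : 0 < |d| := abs_pos.mpr hne
      obtain ⟨X, hXdef⟩ : ∃ x : ℝ, x = ‖(u : X₀)‖ ^ 2 := ⟨_, rfl⟩
      have hX : 0 ≤ X := hXdef ▸ sq_nonneg _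
      have ht : 0 < |d| / (Cd * (X + 1)) := by positivity
      have h5 := habs _ ht
      rw [← hXdef] at h5
      have e : (Cd / 2) * (|d| / (Cd * (X + 1))) * X = |d| * (X / (2 * (X + 1))) := by
        field_simp
      rw [e] at h5
      have h6 : X / (2 * (X + 1)) < 1 := (div_lt_one (by positivity)).2 (by linarith)
      have h7 : |d| * (X / (2 * (X + 1))) < |d| * 1 :=
        mul_lt_mul_of_pos_left h6 habspos
      rw [mul_one] at h7
      linarith
    rw [← hd]; exact hz
  -- Lipschitz estimate for M
  have hMlip : ∀ v v' : V₂, ‖(M v : X₀) - (M v' : X₀)‖ ≤ L * ‖(v : X₀) - (v' : X₀)‖ := by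
    intro v v'
    have hmem : (M v : X₀) - (M v' : X₀) ∈ V₁ := sub_mem (M v).2 (M v').2
    have hub : ‖(M v : X₀) - (M v' : X₀)‖ ^ 2 ≤ lk * ‖T ((M v : X₀) - (M v' : X₀))‖ ^ 2 := by
      have h1 := hV₁b _ hmem
      rwa [real_inner_self_eq_norm_sq] at h1
    have hconc := Stmt7Aux.aux_conc T α β hα hAB hlk0 (M v : X₀) (M v' : X₀) (v : X₀) hub
    have h0 : DJfun T α β ((M v : X₀) + (v : X₀)) ((M v : X₀) - (M v' : X₀)) = 0 := by
      have := hcrit v (M v - M v')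
      rwa [Submodule.coe_sub] at this
    have h0' : DJfun T α β ((M v' : X₀) + (v' : X₀)) ((M v : X₀) - (M v' : X₀)) = 0 := by
      have := hcrit v' (M v - M v')
      rwa [Submodule.coe_sub] at this
    have hlb : δ₀ * ‖(M v : X₀) - (M v' : X₀)‖ ^ 2
        ≤ DJfun T α β ((M v' : X₀) + (v : X₀)) ((M v : X₀) - (M v' : X₀)) := by
      have hre : (1 - α / lk) = -δ₀ := by rw [hδdef]; ring
      rw [hre] at hconc
      linarith
    have hupper := hDJlip ((M v' : X₀) + (v : X₀)) ((M v' : X₀) + (v' : X₀))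
      ((M v : X₀) - (M v' : X₀))
    rw [show ((M v' : X₀) + (v : X₀)) - ((M v' : X₀) + (v' : X₀)) = (v : X₀) - (v' : X₀)
      from by abel, h0', sub_zero] at hupper
    have hup2 := (le_abs_self _).trans hupper
    rcases eq_or_lt_of_le (norm_nonneg ((M v : X₀) - (M v' : X₀))) with hz | hpos
    · rw [← hz]; positivity
    · have hfin := hlb.trans hup2
      rw [hLdef, div_mul_eq_mul_div, le_div_iff₀ hδ]
      nlinarith [hfin, hpos]
  -- the candidate derivative
  have hDbound : ∀ (x : X₀) (w : V₂), |DJfun T α β x (w : X₀)| ≤ (Cd * ‖x‖) * ‖w‖ := by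
    intro x w
    calc |DJfun T α β x (w : X₀)| ≤ Cd * (‖x‖ * ‖(w : X₀)‖) := hDJbound x (w : X₀)
      _ = (Cd * ‖x‖) * ‖w‖ := by rw [hwnorm, mul_assoc]
  let D : V₂ → (V₂ →L[ℝ] ℝ) := fun v =>
    LinearMap.mkContinuous
      { toFun := fun w : V₂ => DJfun T α β ((M v : X₀) + (v : X₀)) (w : X₀)
        map_add' := fun w₁ w₂ => by
          show DJfun T α β _ ((w₁ : X₀) + (w₂ : X₀)) = _
          exact hDJadd _ _ _
        map_smul' := fun t w => by
          show DJfun T α β _ (t • (w : X₀)) = _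
          rw [hDJsmul]
          rfl }
      (Cd * ‖(M v : X₀) + (v : X₀)‖)
      (fun w => by rw [Real.norm_eq_abs]; exact hDbound _ w)
  have hDapp : ∀ (v : V₂) (w : V₂),
      D v w = DJfun T α β ((M v : X₀) + (v : X₀)) (w : X₀) := fun v w => rfl
  refine ⟨D, ?_, fun v => ⟨?_, fun w => hDapp v w⟩⟩
  · -- continuity of D
    have hlip : LipschitzWith (Real.toNNReal (Cd * (L + 1))) D := by
      apply LipschitzWith.of_dist_le_mul
      intro v v'
      rw [dist_eq_norm (D v) (D v'), dist_eq_norm v v']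
      have hb : ∀ w : V₂, ‖(D v - D v') w‖ ≤ (Cd * (L + 1) * ‖(v : X₀) - (v' : X₀)‖) * ‖w‖ := by
        intro w
        rw [ContinuousLinearMap.sub_apply, hDapp, hDapp, Real.norm_eq_abs]
        have h1 := hDJlip ((M v : X₀) + (v : X₀)) ((M v' : X₀) + (v' : X₀)) (w : X₀)
        have h2 : ‖((M v : X₀) + (v : X₀)) - ((M v' : X₀) + (v' : X₀))‖
            ≤ (L + 1) * ‖(v : X₀) - (v' : X₀)‖ := by
          rw [show ((M v : X₀) + (v : X₀)) - ((M v' : X₀) + (v' : X₀))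
              = ((M v : X₀) - (M v' : X₀)) + ((v : X₀) - (v' : X₀)) from by abel]
          calc ‖((M v : X₀) - (M v' : X₀)) + ((v : X₀) - (v' : X₀))‖
              ≤ ‖(M v : X₀) - (M v' : X₀)‖ + ‖(v : X₀) - (v' : X₀)‖ := norm_add_le _ _
            _ ≤ L * ‖(v : X₀) - (v' : X₀)‖ + ‖(v : X₀) - (v' : X₀)‖ := by
                linarith [hMlip v v']
            _ = (L + 1) * ‖(v : X₀) - (v' : X₀)‖ := by ring
        calc |DJfun T α β ((M v : X₀) + (v : X₀)) (w : X₀)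
              - DJfun T α β ((M v' : X₀) + (v' : X₀)) (w : X₀)|
            ≤ Cd * (‖((M v : X₀) + (v : X₀)) - ((M v' : X₀) + (v' : X₀))‖ * ‖(w : X₀)‖) := h1
          _ ≤ Cd * (((L + 1) * ‖(v : X₀) - (v' : X₀)‖) * ‖(w : X₀)‖) := by
              apply mul_le_mul_of_nonneg_left _ hCd.le
              exact mul_le_mul_of_nonneg_right h2 (norm_nonneg _)
          _ = (Cd * (L + 1) * ‖(v : X₀) - (v' : X₀)‖) * ‖w‖ := by rw [hwnorm]; ring
      refine le_trans (ContinuousLinearMap.opNorm_le_bound _ (by positivity) hb) ?_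
      rw [Real.coe_toNNReal _ (by positivity)]
      have hvv : ‖(v : X₀) - (v' : X₀)‖ = ‖v - v'‖ := by rw [← Submodule.coe_sub]; exact hwnorm _
      rw [hvv]
    exact hlip.continuous
  · -- differentiability
    rw [hasFDerivAt_iff_isLittleO_nhds_zero]
    have hquad : ∀ w : V₂,
        |Jfun T α β ((M (v + w) : X₀) + ((v + w : V₂) : X₀))
            - Jfun T α β ((M v : X₀) + (v : X₀)) - D v w|
          ≤ (Cd / 2 + Cd * L) * ‖(w : X₀)‖ ^ 2 := by
      intro w
      rw [hDapp]
      have hco : ((v + w : V₂) : X₀) = (v : X₀) + (w : X₀) := by push_cast; ring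
      -- lower bound
      have hl1 := hM (v + w) (M v)
      rw [hco, show (M v : X₀) + ((v : X₀) + (w : X₀))
          = ((M v : X₀) + (v : X₀)) + (w : X₀) from by abel] at hl1
      have hl2 := (abs_le.mp (hJexp ((M v : X₀) + (v : X₀)) (w : X₀))).1
      -- upper bound
      have hu1 := hM v (M (v + w))
      have hu2 := abs_le.mp (hJexp ((M (v + w) : X₀) + (v : X₀)) (w : X₀))
      have hu3 := hDJlip ((M (v + w) : X₀) + (v : X₀)) ((M v : X₀) + (v : X₀)) (w : X₀)
      rw [show ((M (v + w) : X₀) + (v : X₀)) - ((M v : X₀) + (v : X₀))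
          = (M (v + w) : X₀) - (M v : X₀) from by abel] at hu3
      have hMw : ‖(M (v + w) : X₀) - (M v : X₀)‖ ≤ L * ‖(w : X₀)‖ := by
        have h5 := hMlip (v + w) v
        rw [hco, show ((v : X₀) + (w : X₀)) - (v : X₀) = (w : X₀) from by abel] at h5
        exact h5
      have hu4 : Cd * (‖(M (v + w) : X₀) - (M v : X₀)‖ * ‖(w : X₀)‖)
          ≤ Cd * ((L * ‖(w : X₀)‖) * ‖(w : X₀)‖) := by
        apply mul_le_mul_of_nonneg_left _ hCd.le
        exact mul_le_mul_of_nonneg_right hMw (norm_nonneg _)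
      have hu5 : Cd * ((L * ‖(w : X₀)‖) * ‖(w : X₀)‖) = Cd * L * ‖(w : X₀)‖ ^ 2 := by ring
      have hu6 := (abs_le.mp hu3).2
      have hFw : (M (v + w) : X₀) + ((v + w : V₂) : X₀)
          = ((M (v + w) : X₀) + (v : X₀)) + (w : X₀) := by rw [hco]; abel
      rw [hFw]
      rw [show (M (v + w) : X₀) + ((v : X₀) + (w : X₀))
          = ((M (v + w) : X₀) + (v : X₀)) + (w : X₀) from by abel] at hl1
      rw [abs_le]
      constructor
      · nlinarith [hl1, hl2, sq_nonneg ‖(w : X₀)‖, mul_nonneg (mul_nonneg hCd.le hL) (sq_nonneg ‖(w : X₀)‖)]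
      · nlinarith [hu1, hu2.2, hu6, hu4, hu5]
    refine Asymptotics.isLittleO_iff.mpr fun c hc => ?_
    have hC2 : 0 < Cd / 2 + Cd * L + 1 := by positivity
    filter_upwards [Metric.ball_mem_nhds (0 : V₂)
      (show 0 < c / (Cd / 2 + Cd * L + 1) by positivity)] with w hw
    rw [Metric.mem_ball, dist_zero_right] at hw
    have h1 := hquad w
    rw [hwnorm] at h1
    rw [Real.norm_eq_abs]
    refine h1.trans ?_
    have hy : 0 ≤ c / (Cd / 2 + Cd * L + 1) := by positivity
    have hcc : c / (Cd / 2 + Cd * L + 1) * (Cd / 2 + Cd * L + 1) = c :=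
      div_mul_cancel₀ _ (ne_of_gt hC2)
    have hBw : 0 ≤ (Cd / 2 + Cd * L) * ‖w‖ := by positivity
    have t1 := mul_le_mul_of_nonneg_left hw.le hBw
    nlinarith [t1, hcc, mul_nonneg hy (norm_nonneg w), norm_nonneg w, hc.le]
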